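/- Let G act on X, let A ⊆ G and Y ⊆ X be nonempty with Y finite, and suppose there exists α ∈ (0,1) such that Sym_α(Y) ⊆ AA⁻¹ and |A⁻¹ · Y| ≤ ((3 − α)/2)|Y|. Then AA⁻¹ is a subgroup of G. -/
import Mathlib


open Pointwise

/-- If `Sym_α(Y) ⊆ AA⁻¹` and `|A⁻¹ · Y| ≤ ((3 − α)/2)|Y|` for some `α ∈ (0,1)`,
then `AA⁻¹` is a subgroup of `G`. -/
theorem stmt_3 {G X : Type*} [Group G] [MulAction G X] [DecidableEq G] [DecidableEq X]
    (A : Finset G) (Y : Finset X) (hA : A.Nonempty) (hY : Y.Nonempty)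
    (α : ℝ) (hα0 : 0 < α) (hα1 : α < 1)
    (hsym : ∀ g : G, α * Y.card ≤ (((g • Y) ∩ Y).card : ℝ) → g ∈ A * A⁻¹)
    (h : (((A⁻¹ : Finset G) • Y).card : ℝ) ≤ (3 - α) / 2 * Y.card) :
    ∃ H : Subgroup G, (H : Set G) = ((A * A⁻¹ : Finset G) : Set G) := by
  have hYc : (0 : ℝ) ≤ (Y.card : ℝ) := Nat.cast_nonneg _
  -- intersection lower bound for two subsets of A⁻¹ • Y
  have hinter : ∀ s t : Finset X, s ⊆ (A⁻¹ : Finset G) • Y → t ⊆ (A⁻¹ : Finset G) • Y →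
      (s.card : ℝ) + t.card - ((A⁻¹ : Finset G) • Y).card ≤ ((s ∩ t).card : ℝ) := by
    intro s t hs ht
    have h1 : (s ∪ t).card + (s ∩ t).card = s.card + t.card :=
      Finset.card_union_add_card_inter s t
    have h2 : (s ∪ t).card ≤ ((A⁻¹ : Finset G) • Y).card :=
      Finset.card_le_card (Finset.union_subset hs ht)
    have h1' : ((s ∪ t).card : ℝ) + (s ∩ t).card = s.card + t.card := by
      exact_mod_cast h1
    have h2' : ((s ∪ t).card : ℝ) ≤ ((A⁻¹ : Finset G) • Y).card := by exact_mod_cast h2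
    linarith
  -- key: every element of A * A⁻¹ satisfies a strong symmetry bound
  have key : ∀ g ∈ A * A⁻¹, (1 + α) / 2 * Y.card ≤ (((g • Y) ∩ Y).card : ℝ) := by
    intro g hg
    rw [Finset.mem_mul] at hg
    obtain ⟨a, ha, b, hb, rfl⟩ := hg
    have ha' : a⁻¹ ∈ (A⁻¹ : Finset G) := Finset.inv_mem_inv ha
    have hsub1 : b • Y ⊆ (A⁻¹ : Finset G) • Y := Finset.smul_finset_subset_smul hb
    have hsub2 : a⁻¹ • Y ⊆ (A⁻¹ : Finset G) • Y := Finset.smul_finset_subset_smul ha'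
    have hcard : ((b • Y ∩ a⁻¹ • Y).card : ℝ) = (((a * b) • Y ∩ Y).card : ℝ) := by
      have : a • (b • Y ∩ a⁻¹ • Y) = (a * b) • Y ∩ Y := by
        rw [Finset.smul_finset_inter, smul_smul, smul_smul, mul_inv_cancel, one_smul]
      rw [← this, Finset.card_smul_finset]
    have h1 := hinter (b • Y) (a⁻¹ • Y) hsub1 hsub2
    rw [Finset.card_smul_finset, Finset.card_smul_finset, hcard] at h1
    linarith
  refine ⟨{ carrier := ((A * A⁻¹ : Finset G) : Set G),
            one_mem' := ?_, mul_mem' := ?_, inv_mem' := ?_ }, rfl⟩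
  · intro g h' hg hh
    simp only [Finset.mem_coe] at hg hh ⊢
    have kg := key g hg
    have kh := key h' hh
    -- |(g h') Y ∩ Y| ≥ |(g h')Y ∩ gY| + |gY ∩ Y| - |Y|
    set U := (g * h') • Y ∩ g • Y with hU
    set V := g • Y ∩ Y with hV
    have hUcard : (U.card : ℝ) = ((h' • Y ∩ Y).card : ℝ) := by
      have : g⁻¹ • U = h' • Y ∩ Y := by
        rw [hU, Finset.smul_finset_inter, smul_smul, smul_smul, inv_mul_cancel,
          one_smul, inv_mul_cancel_left]
      rw [← this, Finset.card_smul_finset]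
    have hUV : U ∩ V ⊆ (g * h') • Y ∩ Y :=
      Finset.inter_subset_inter (Finset.inter_subset_left) (Finset.inter_subset_right)
    have hUg : U ⊆ g • Y := Finset.inter_subset_right
    have hVg : V ⊆ g • Y := Finset.inter_subset_left
    have hcup : ((U ∪ V).card : ℝ) ≤ (Y.card : ℝ) := by
      have : (U ∪ V).card ≤ (g • Y).card :=
        Finset.card_le_card (Finset.union_subset hUg hVg)
      rw [Finset.card_smul_finset] at this
      exact_mod_cast this
    have h1 : ((U ∪ V).card : ℝ) + (U ∩ V).card = U.card + V.card := by
      exact_mod_cast Finset.card_union_add_card_inter U V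
    have h2 : ((U ∩ V).card : ℝ) ≤ (((g * h') • Y ∩ Y).card : ℝ) := by
      exact_mod_cast Finset.card_le_card hUV
    exact hsym _ (by rw [hUcard] at h1; linarith)
  · have : ((1 : G) • Y) ∩ Y = Y := by rw [one_smul, Finset.inter_self]
    have := hsym 1 (by rw [this]; nlinarith)
    exact_mod_cast this
  · intro g hg
    simp only [Finset.mem_coe] at hg ⊢
    have kg := key g hg
    have hcard : ((g⁻¹ • Y ∩ Y).card : ℝ) = ((g • Y ∩ Y).card : ℝ) := by
      have : g • (g⁻¹ • Y ∩ Y) = Y ∩ g • Y := by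
        rw [Finset.smul_finset_inter, smul_inv_smul]
      rw [← Finset.card_smul_finset g (g⁻¹ • Y ∩ Y), this, Finset.inter_comm]
    exact hsym _ (by rw [hcard]; nlinarith)
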